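/- Let Q be a Markov kernel on (X,𝒳) and G a Markov kernel from (X,𝒳) to (Y,𝒴), and let T := Q⊗G be the Markov kernel on X×Y defined by T[(x,y),C] := ∬ Q(x,dx') G(x',dy') 1_C(x',y'). Let {(X_k,Y_k)}_{k≥0} be the Markov chain with kernel T and initial distribution ν⊗G, where (ν⊗G)(C) := ∬ ν(dx) G(x,dy) 1_C(x,y). Then for every n ≥ 0 and every nonnegative measurable function f on Y, E^T_{ν⊗G}[ ∏_{k=0}^n f(Y_k) ] = E^Q_ν[ ∏_{k=0}^n G(X_k, f) ], where G(x,f) := ∫ G(x,dy) f(y). -/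

import Mathlib

open MeasureTheory ProbabilityTheory
open scoped ENNReal

/-- The law of the Markov chain with kernel `Q` and initial distribution `ν`, realized as a
measure on `ℕ → X`: `pathMeasure Q ν n` carries the joint law of the first `n+1`
coordinates (coordinates beyond `n` are frozen copies). -/
noncomputable def pathMeasure {X : Type*} [MeasurableSpace X] (Q : Kernel X X)
    (ν : Measure X) : ℕ → Measure (ℕ → X)
  | 0 => ν.map (fun x _ => x)
  | n + 1 => (pathMeasure Q ν n).bind
      (fun ω => (Q (ω n)).map (fun x' => Function.update ω (n + 1) x'))

/-- The joint HMM kernel `T = Q ⊗ G` on `X × Y`,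
`T[(x,y), C] = ∬ Q(x,dx') G(x',dy') 1_C(x',y')`. -/
noncomputable def jointKernel {X Y : Type*} [MeasurableSpace X] [MeasurableSpace Y]
    (Q : Kernel X X) (G : Kernel X Y) [IsSFiniteKernel Q] [IsSFiniteKernel G] :
    Kernel (X × Y) (X × Y) :=
  Kernel.comap (Q ⊗ₖ (G.comap Prod.snd measurable_snd)) Prod.fst measurable_fst

instance {X Y : Type*} [MeasurableSpace X] [MeasurableSpace Y]
    (Q : Kernel X X) (G : Kernel X Y) [IsMarkovKernel Q] [IsMarkovKernel G] :
    IsMarkovKernel (jointKernel Q G) := by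
  unfold jointKernel; infer_instance

lemma measurable_pathKernel {X : Type*} [MeasurableSpace X] (Q : Kernel X X)
    [IsSFiniteKernel Q] (n : ℕ) :
    Measurable (fun ω : ℕ → X => (Q (ω n)).map (fun x' => Function.update ω (n + 1) x')) := by
  apply Measure.measurable_of_measurable_coe
  intro s hs
  simp_rw [Measure.map_apply (measurable_update _) hs]
  have ht : MeasurableSet {p : (ℕ → X) × X | Function.update p.1 (n + 1) p.2 ∈ s} :=
    measurable_update' hs
  exact (Kernel.measurable_kernel_prodMk_left (κ := Q.comap (fun ω : ℕ → X => ω n)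
    (measurable_pi_apply n)) ht)

lemma lintegral_pathMeasure_succ {X : Type*} [MeasurableSpace X] (Q : Kernel X X)
    [IsSFiniteKernel Q] (ν : Measure X) (n : ℕ) {g : (ℕ → X) → ℝ≥0∞} (hg : Measurable g) :
    ∫⁻ ω, g ω ∂(pathMeasure Q ν (n + 1))
      = ∫⁻ ω, ∫⁻ x', g (Function.update ω (n + 1) x') ∂(Q (ω n)) ∂(pathMeasure Q ν n) := by
  rw [show pathMeasure Q ν (n+1) = (pathMeasure Q ν n).bind
      (fun ω => (Q (ω n)).map (fun x' => Function.update ω (n + 1) x')) from rfl,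
    Measure.lintegral_bind (measurable_pathKernel Q n).aemeasurable hg.aemeasurable]
  refine lintegral_congr fun ω => ?_
  rw [lintegral_map hg (measurable_update _)]

lemma key_hmm {X Y : Type*} [MeasurableSpace X] [MeasurableSpace Y]
    (Q : Kernel X X) [IsMarkovKernel Q] (G : Kernel X Y) [IsMarkovKernel G]
    (ν : Measure X) [IsProbabilityMeasure ν]
    (f : Y → ℝ≥0∞) (hf : Measurable f) :
    ∀ (n : ℕ) (F : (ℕ → X) → ℝ≥0∞), Measurable F →
    (∫⁻ ω, F (fun k => (ω k).1) * ∏ k ∈ Finset.range (n + 1), f (ω k).2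
        ∂(pathMeasure (jointKernel Q G) (ν ⊗ₘ G) n))
      = ∫⁻ ω, F ω * ∏ k ∈ Finset.range (n + 1), (∫⁻ y, f y ∂(G (ω k)))
          ∂(pathMeasure Q ν n) := by
  set Gf : X → ℝ≥0∞ := fun x => ∫⁻ y, f y ∂G x with hGf_def
  have hGf : Measurable Gf :=
    Measurable.lintegral_kernel_prod_right' (κ := G) (hf.comp measurable_snd)
  have hfstω : Measurable (fun ω : ℕ → X × Y => (fun k => (ω k).1)) :=
    measurable_pi_lambda _ fun k => (measurable_pi_apply k).fst
  intro n
  induction n with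
  | zero =>
    intro F hF
    have hm1 : Measurable (fun ω : ℕ → X × Y =>
        F (fun k => (ω k).1) * ∏ k ∈ Finset.range (0 + 1), f (ω k).2) :=
      (hF.comp hfstω).mul
        (Finset.measurable_prod _ fun k _ => hf.comp ((measurable_pi_apply k).snd))
    have hm2 : Measurable (fun ω : ℕ → X =>
        F ω * ∏ k ∈ Finset.range (0 + 1), Gf (ω k)) :=
      hF.mul (Finset.measurable_prod _ fun k _ => hGf.comp (measurable_pi_apply k))
    show (∫⁻ ω, F (fun k => (ω k).1) * ∏ k ∈ Finset.range (0 + 1), f (ω k).2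
        ∂((ν ⊗ₘ G).map (fun p _ => p)))
      = ∫⁻ ω, F ω * ∏ k ∈ Finset.range (0 + 1), Gf (ω k) ∂(ν.map (fun x _ => x))
    have hc1 : Measurable (fun (p : X × Y) (_ : ℕ) => p) :=
      measurable_pi_lambda _ fun _ => measurable_id
    have hc2 : Measurable (fun (x : X) (_ : ℕ) => x) :=
      measurable_pi_lambda _ fun _ => measurable_id
    rw [lintegral_map hm1 hc1, lintegral_map hm2 hc2]
    simp only [zero_add, Finset.prod_range_one]
    rw [Measure.lintegral_compProd (show Measurable (fun p : X × Y =>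
      F (fun _ => p.1) * f p.2) from
      (hF.comp (measurable_pi_lambda _ fun _ => measurable_fst)).mul (hf.comp measurable_snd))]
    refine lintegral_congr fun x => ?_
    show ∫⁻ b, (F fun _ => x) * f b ∂G x = (F fun _ => x) * Gf x
    exact lintegral_const_mul _ hf
  | succ n ih =>
    intro F hF
    set F' : (ℕ → X) → ℝ≥0∞ :=
      fun ω => ∫⁻ x', F (Function.update ω (n + 1) x') * Gf x' ∂(Q (ω n)) with hF'_def
    have hF' : Measurable F' := by
      refine Measurable.lintegral_kernel_prod_right'
        (κ := Q.comap (fun ω : ℕ → X => ω n) (measurable_pi_apply n))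
        (f := fun p : (ℕ → X) × X => F (Function.update p.1 (n + 1) p.2) * Gf p.2) ?_
      exact (hF.comp measurable_update').mul (hGf.comp measurable_snd)
    have hmeas1 : Measurable (fun ω : ℕ → X × Y =>
        F (fun k => (ω k).1) * ∏ k ∈ Finset.range (n + 1 + 1), f (ω k).2) :=
      (hF.comp hfstω).mul
        (Finset.measurable_prod _ fun k _ => hf.comp ((measurable_pi_apply k).snd))
    have hmeas2 : Measurable (fun ω : ℕ → X =>
        F ω * ∏ k ∈ Finset.range (n + 1 + 1), Gf (ω k)) :=
      hF.mul (Finset.measurable_prod _ fun k _ => hGf.comp (measurable_pi_apply k))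
    rw [lintegral_pathMeasure_succ _ _ _ hmeas1, lintegral_pathMeasure_succ _ _ _ hmeas2]
    have hstep : ∀ ω : ℕ → X × Y,
        (∫⁻ p, F (fun k => ((Function.update ω (n + 1) p) k).1)
            * ∏ k ∈ Finset.range (n + 1 + 1), f ((Function.update ω (n + 1) p) k).2
            ∂((jointKernel Q G) (ω n)))
          = F' (fun k => (ω k).1) * ∏ k ∈ Finset.range (n + 1), f (ω k).2 := by
      intro ω
      have happ : ∀ p : X × Y,
          (F (fun k => ((Function.update ω (n + 1) p) k).1)
            * ∏ k ∈ Finset.range (n + 1 + 1), f ((Function.update ω (n + 1) p) k).2)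
          = (F (Function.update (fun k => (ω k).1) (n + 1) p.1) * f p.2)
            * ∏ k ∈ Finset.range (n + 1), f (ω k).2 := by
        intro p
        have h1 : (fun k => ((Function.update ω (n + 1) p) k).1)
            = Function.update (fun k => (ω k).1) (n + 1) p.1 := by
          funext k
          rcases eq_or_ne k (n + 1) with h | h
          · subst h; simp
          · simp [Function.update_of_ne h]
        have h2 : ∏ k ∈ Finset.range (n + 1 + 1), f ((Function.update ω (n + 1) p) k).2
            = (∏ k ∈ Finset.range (n + 1), f (ω k).2) * f p.2 := by
          rw [Finset.prod_range_succ, Function.update_self]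
          congr 1
          refine Finset.prod_congr rfl fun k hk => ?_
          rw [Function.update_of_ne (Nat.ne_of_lt (Finset.mem_range.mp hk))]
        rw [h1, h2]; ring
      simp_rw [happ]
      rw [lintegral_mul_const _ (show Measurable (fun p : X × Y =>
        F (Function.update (fun k => (ω k).1) (n + 1) p.1) * f p.2) from
        (hF.comp ((measurable_update _).comp measurable_fst)).mul (hf.comp measurable_snd))]
      congr 1
      rw [jointKernel, Kernel.comap_apply,
        Kernel.lintegral_compProd _ _ _ (show Measurable (fun p : X × Y =>
          F (Function.update (fun k => (ω k).1) (n + 1) p.1) * f p.2) from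
          (hF.comp ((measurable_update _).comp measurable_fst)).mul (hf.comp measurable_snd))]
      refine lintegral_congr fun x' => ?_
      show ∫⁻ c, F (Function.update (fun k => (ω k).1) (n + 1) x') * f c
          ∂((G.comap Prod.snd measurable_snd) ((ω n).1, x'))
        = F (Function.update (fun k => (ω k).1) (n + 1) x') * Gf x'
      rw [Kernel.comap_apply]
      exact lintegral_const_mul _ hf
    simp_rw [hstep]
    rw [ih F' hF']
    refine lintegral_congr fun ω => ?_
    have happ' : ∀ x' : X,
        F (Function.update ω (n + 1) x')
          * ∏ k ∈ Finset.range (n + 1 + 1), Gf ((Function.update ω (n + 1) x') k)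
        = (F (Function.update ω (n + 1) x') * Gf x')
            * ∏ k ∈ Finset.range (n + 1), Gf (ω k) := by
      intro x'
      have h2 : ∏ k ∈ Finset.range (n + 1 + 1), Gf ((Function.update ω (n + 1) x') k)
          = (∏ k ∈ Finset.range (n + 1), Gf (ω k)) * Gf x' := by
        rw [Finset.prod_range_succ, Function.update_self]
        congr 1
        refine Finset.prod_congr rfl fun k hk => ?_
        rw [Function.update_of_ne (Nat.ne_of_lt (Finset.mem_range.mp hk))]
      rw [h2]; ring
    simp_rw [happ']
    rw [lintegral_mul_const _ (show Measurable (fun x' : X =>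
      F (Function.update ω (n + 1) x') * Gf x') from
      (hF.comp (measurable_update _)).mul hGf)]

/-- for the Markov chain `{(X_k,Y_k)}` with kernel `T = Q ⊗ G` and initial
distribution `ν ⊗ G`, for every `n` and every nonnegative measurable `f` on `Y`,
`E^T_{ν⊗G}[∏_{k=0}^n f(Y_k)] = E^Q_ν[∏_{k=0}^n G(X_k, f)]`. -/
theorem forgetting_hmm_stmt12 {X Y : Type*} [MeasurableSpace X] [MeasurableSpace Y]
    (Q : Kernel X X) [IsMarkovKernel Q] (G : Kernel X Y) [IsMarkovKernel G]
    (ν : Measure X) [IsProbabilityMeasure ν]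
    (n : ℕ) (f : Y → ℝ≥0∞) (hf : Measurable f) :
    (∫⁻ ω, ∏ k ∈ Finset.range (n + 1), f (ω k).2
        ∂(pathMeasure (jointKernel Q G) (ν ⊗ₘ G) n))
      = ∫⁻ ω, ∏ k ∈ Finset.range (n + 1), (∫⁻ y, f y ∂(G (ω k)))
          ∂(pathMeasure Q ν n) := by
  have := key_hmm Q G ν f hf n (fun _ => 1) measurable_const
  simpa using this
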